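/- Let n ≥ 2 and let λ ∈ ℝⁿ satisfy 0 ≤ λ_1 ≤ λ_2 ≤ ... ≤ λ_n and λ_1 + λ_2 > 0 (so λ ∈ Γ). Suppose that ∑_{i=1}^n (∑_{j ≠ i} (λ_i + λ_j)^{-2}) · λ_i · (λ_n − λ_i) = 0. Then exactly one of the following holds: (i) λ_1 = 0 and λ_2 = λ_3 = ... = λ_n, in which case λ_n = ((n−1)(n+2)/4)·G(λ); or (ii) λ_1 = λ_2 = ... = λ_n, in which case λ_n = (n(n−1)/4)·G(λ). In either case, λ_n ≤ ((n−1)(n+2)/4)·G(λ). (This is the rigidity dichotomy arising in the classification of limit flows attaining the sharp curvature pinching constant.) -/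

import Mathlib

open Finset

/-- The sum `∑_{i<j} 1/(λ_i + λ_j)` over pairs of indices. -/
noncomputable def pairSum (n : ℕ) (lam : Fin n → ℝ) : ℝ :=
  ∑ i : Fin n, ∑ j ∈ univ.filter (fun j => i < j), (lam i + lam j)⁻¹

/-- The fully nonlinear speed `G(λ) = (∑_{i<j} 1/(λ_i + λ_j))⁻¹`. -/
noncomputable def Gfun (n : ℕ) (lam : Fin n → ℝ) : ℝ := (pairSum n lam)⁻¹

lemma pairSum_eq {n : ℕ} (hn : 2 ≤ n) (lam : Fin n → ℝ) (a c : ℝ)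
    (h0 : lam ⟨0, Nat.pos_of_ne_zero (by omega)⟩ = a) (hc : ∀ i : Fin n, (i : ℕ) ≠ 0 → lam i = c) :
    pairSum n lam = ((n:ℝ)-1)*(a+c)⁻¹ + (((n:ℝ)-1)*((n:ℝ)-2)/2)*(2*c)⁻¹ := by
  have hz : (⟨0, Nat.pos_of_ne_zero (by omega)⟩ : Fin n) ∈ (univ : Finset (Fin n)) := mem_univ _
  have hcard : ∀ i : Fin n, (univ.filter (fun j => i < j)).card = n - 1 - (i : ℕ) := by
    intro i
    rw [show (univ.filter (fun j => i < j)) = Finset.Ioi i from ?_, Fin.card_Ioi]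
    ext j; simp [Finset.mem_Ioi]
  have hstep : pairSum n lam = ∑ i : Fin n, ((n - 1 - (i:ℕ) : ℕ) : ℝ) * (lam i + c)⁻¹ := by
    unfold pairSum
    refine Finset.sum_congr rfl fun i _ => ?_
    rw [Finset.sum_congr rfl (fun j hj => ?_), Finset.sum_const, hcard, nsmul_eq_mul]
    have hj' : i < j := by simpa using hj
    rw [hc j (by have := hj'; omega)]
  have hN : (∑ i : Fin n, (n - 1 - (i:ℕ))) * 2 = n * (n-1) := by
    rw [Fin.sum_univ_eq_sum_range (fun k => n - 1 - k) n,
      Finset.sum_range_reflect (fun k => k) n, Finset.sum_range_id_mul_two]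
  have hS2 : (∑ i : Fin n, ((n - 1 - (i:ℕ) : ℕ) : ℝ)) * 2 = (n:ℝ) * ((n:ℝ) - 1) := by
    rw [← Nat.cast_sum, show (2:ℝ) = ((2:ℕ):ℝ) from rfl, ← Nat.cast_mul, hN,
      Nat.cast_mul, Nat.cast_sub (by omega), Nat.cast_one]
  rw [hstep, ← Finset.add_sum_erase _ _ hz]
  have hsplit : (∑ i : Fin n, ((n - 1 - (i:ℕ) : ℕ) : ℝ)) =
      ((n - 1 - ((⟨0, Nat.pos_of_ne_zero (by omega)⟩ : Fin n) : ℕ) : ℕ) : ℝ) +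
      ∑ i ∈ univ.erase (⟨0, Nat.pos_of_ne_zero (by omega)⟩ : Fin n), ((n - 1 - (i:ℕ) : ℕ) : ℝ) :=
    (Finset.add_sum_erase _ _ hz).symm
  have herase : ∑ i ∈ univ.erase (⟨0, Nat.pos_of_ne_zero (by omega)⟩ : Fin n), ((n - 1 - (i:ℕ) : ℕ) : ℝ) * (lam i + c)⁻¹
      = (∑ i ∈ univ.erase (⟨0, Nat.pos_of_ne_zero (by omega)⟩ : Fin n), ((n - 1 - (i:ℕ) : ℕ) : ℝ)) * (2*c)⁻¹ := by
    rw [Finset.sum_mul]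
    refine Finset.sum_congr rfl fun i hi => ?_
    have hi0 : (i : ℕ) ≠ 0 := by
      intro h; exact (Finset.mem_erase.mp hi).1 (Fin.ext h)
    rw [hc i hi0, two_mul]
  have hcast : ((n - 1 - ((⟨0, Nat.pos_of_ne_zero (by omega)⟩ : Fin n) : ℕ) : ℕ) : ℝ) = (n:ℝ) - 1 := by
    simp; rw [Nat.cast_sub (by omega), Nat.cast_one]
  rw [herase, h0, hcast]
  have hT : ∑ i ∈ univ.erase (⟨0, Nat.pos_of_ne_zero (by omega)⟩ : Fin n), ((n - 1 - (i:ℕ) : ℕ) : ℝ)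
      = ((n:ℝ)-1)*((n:ℝ)-2)/2 := by
    have := hsplit
    rw [hcast] at this
    linarith [hS2, this]
  rw [hT]
/-- Rigidity dichotomy: if `0 ≤ λ₁ ≤ … ≤ λ_n`, `λ₁ + λ₂ > 0`, and
`∑_i (∑_{j≠i} (λ_i+λ_j)⁻²) λ_i (λ_n - λ_i) = 0`, then exactly one of
(i) `λ₁ = 0`, `λ₂ = ⋯ = λ_n` and `λ_n = ((n-1)(n+2)/4)·G(λ)`; or
(ii) `λ₁ = ⋯ = λ_n` and `λ_n = (n(n-1)/4)·G(λ)` holds.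
In either case `λ_n ≤ ((n-1)(n+2)/4)·G(λ)`. -/
theorem rigidity_dichotomy (n : ℕ) (hn : 2 ≤ n) (lam : Fin n → ℝ)
    (hsort : Monotone lam)
    (hnonneg : 0 ≤ lam ⟨0, by omega⟩)
    (h2conv : 0 < lam ⟨0, by omega⟩ + lam ⟨1, by omega⟩)
    (hsum : ∑ i : Fin n,
        (∑ j ∈ univ.filter (fun j => j ≠ i), ((lam i + lam j) ^ 2)⁻¹) *
          lam i * (lam ⟨n - 1, by omega⟩ - lam i) = 0) :
    Xor'
      (lam ⟨0, by omega⟩ = 0 ∧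
        (∀ i : Fin n, (i : ℕ) ≠ 0 → lam i = lam ⟨n - 1, by omega⟩) ∧
        lam ⟨n - 1, by omega⟩ = (((n : ℝ) - 1) * ((n : ℝ) + 2) / 4) * Gfun n lam)
      ((∀ i : Fin n, lam i = lam ⟨n - 1, by omega⟩) ∧
        lam ⟨n - 1, by omega⟩ = ((n : ℝ) * ((n : ℝ) - 1) / 4) * Gfun n lam) ∧
    lam ⟨n - 1, by omega⟩ ≤ (((n : ℝ) - 1) * ((n : ℝ) + 2) / 4) * Gfun n lam := by
  set z : Fin n := ⟨0, by omega⟩ with hzdef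
  set o : Fin n := ⟨1, by omega⟩ with hodef
  set N : Fin n := ⟨n - 1, by omega⟩ with hNdef
  -- positivity of pair sums
  have hpair : ∀ i j : Fin n, i ≠ j → 0 < lam i + lam j := by
    intro i j hij
    rcases lt_or_gt_of_ne hij with h | h
    · have h1 : lam o ≤ lam j := hsort (by simp [hodef, Fin.le_def]; omega)
      have h0 : lam z ≤ lam i := hsort (by simp [hzdef, Fin.le_def])
      linarith
    · have h1 : lam o ≤ lam i := hsort (by simp [hodef, Fin.le_def]; omega)
      have h0 : lam z ≤ lam j := hsort (by simp [hzdef, Fin.le_def])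
      linarith
  have h1pos : 0 < lam o := by
    have : lam z ≤ lam o := hsort (by simp [hzdef, hodef, Fin.le_def])
    linarith
  have hiN : ∀ i : Fin n, lam i ≤ lam N := by
    intro i; exact hsort (by simp [hNdef, Fin.le_def]; omega)
  have hinn : ∀ i : Fin n, 0 ≤ lam i := fun i =>
    le_trans hnonneg (hsort (by simp [hzdef, Fin.le_def]))
  -- each term of hsum vanishes
  have hterm : ∀ i : Fin n,
      (∑ j ∈ univ.filter (fun j => j ≠ i), ((lam i + lam j) ^ 2)⁻¹) *
        lam i * (lam N - lam i) = 0 := by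
    have := (Finset.sum_eq_zero_iff_of_nonneg ?_).mp hsum
    · intro i; exact this i (mem_univ i)
    · intro i _
      have hc : 0 ≤ ∑ j ∈ univ.filter (fun j => j ≠ i), ((lam i + lam j) ^ 2)⁻¹ :=
        Finset.sum_nonneg fun j _ => by positivity
      exact mul_nonneg (mul_nonneg hc (hinn i)) (by linarith [hiN i])
  -- each lam i is 0 or lam N
  have hdich : ∀ i : Fin n, lam i = 0 ∨ lam i = lam N := by
    intro i
    have hcpos : 0 < ∑ j ∈ univ.filter (fun j => j ≠ i), ((lam i + lam j) ^ 2)⁻¹ := by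
      refine Finset.sum_pos (fun j hj => ?_) ?_
      · have hj' : j ≠ i := by simpa using hj
        have := hpair i j (Ne.symm hj')
        positivity
      · rcases eq_or_ne i z with rfl | hne
        · exact ⟨o, by simp [hzdef, hodef, Fin.ext_iff]⟩
        · exact ⟨z, by simp [Ne.symm hne]⟩
    have h0 : lam i * (lam N - lam i) = 0 := by
      have := hterm i
      rcases mul_eq_zero.mp this with h | h
      · rcases mul_eq_zero.mp h with h | h
        · exact absurd h (ne_of_gt hcpos)
        · rw [h]; ring
      · rw [h]; ring
    rcases mul_eq_zero.mp h0 with h | h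
    · exact Or.inl h
    · exact Or.inr (by linarith)
  have htail : ∀ i : Fin n, (i : ℕ) ≠ 0 → lam i = lam N := by
    intro i hi
    rcases hdich i with h | h
    · exfalso
      have : lam o ≤ lam i := hsort (by simp [hodef, Fin.le_def]; omega)
      linarith
    · exact h
  have hNval : lam N = lam o := (htail o (by simp [hodef])).symm
  have hNpos : 0 < lam N := hNval ▸ h1pos
  rcases hdich z with hz0 | hzN
  · -- case (i)
    have hps : pairSum n lam = ((n:ℝ)-1)*(0 + lam N)⁻¹ + (((n:ℝ)-1)*((n:ℝ)-2)/2)*(2*lam N)⁻¹ :=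
      pairSum_eq hn lam 0 (lam N) hz0 htail
    have hn1 : (0:ℝ) < (n:ℝ) - 1 := by
      have : (2:ℝ) ≤ (n:ℝ) := by exact_mod_cast hn
      linarith
    have hn2 : (0:ℝ) ≤ (n:ℝ) - 2 := by
      have : (2:ℝ) ≤ (n:ℝ) := by exact_mod_cast hn
      linarith
    have hpsval : pairSum n lam = ((n:ℝ)-1)*((n:ℝ)+2)/(4*lam N) := by
      rw [hps]; field_simp; ring
    have hG : Gfun n lam = 4*lam N/(((n:ℝ)-1)*((n:ℝ)+2)) := by
      rw [Gfun, hpsval]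
      rw [inv_div]
    have hlamN : lam N = (((n:ℝ)-1)*((n:ℝ)+2)/4) * Gfun n lam := by
      rw [hG]; field_simp
    refine ⟨Or.inl ⟨⟨hz0, htail, hlamN⟩, ?_⟩, le_of_eq hlamN⟩
    rintro ⟨hall, -⟩
    have := hall z
    rw [hz0] at this
    linarith
  · -- case (ii)
    have hall : ∀ i : Fin n, lam i = lam N := by
      intro i
      rcases Nat.eq_zero_or_pos (i : ℕ) with h | h
      · have : i = z := Fin.ext h
        rw [this]; exact hzN
      · exact htail i (by omega)
    have hps : pairSum n lam = ((n:ℝ)-1)*(lam N + lam N)⁻¹ + (((n:ℝ)-1)*((n:ℝ)-2)/2)*(2*lam N)⁻¹ :=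
      pairSum_eq hn lam (lam N) (lam N) hzN htail
    have hn1 : (0:ℝ) < (n:ℝ) - 1 := by
      have : (2:ℝ) ≤ (n:ℝ) := by exact_mod_cast hn
      linarith
    have hn2 : (0:ℝ) ≤ (n:ℝ) - 2 := by
      have : (2:ℝ) ≤ (n:ℝ) := by exact_mod_cast hn
      linarith
    have hpsval : pairSum n lam = (n:ℝ)*((n:ℝ)-1)/(4*lam N) := by
      rw [hps]; field_simp; ring
    have hnpos : (0:ℝ) < (n:ℝ) := by linarith
    have hG : Gfun n lam = 4*lam N/((n:ℝ)*((n:ℝ)-1)) := by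
      rw [Gfun, hpsval, inv_div]
    have hlamN : lam N = ((n:ℝ)*((n:ℝ)-1)/4) * Gfun n lam := by
      rw [hG]; field_simp
    have hGpos : 0 < Gfun n lam := by
      rw [hG]; positivity
    constructor
    · refine Or.inr ⟨⟨hall, hlamN⟩, ?_⟩
      rintro ⟨h0, -, -⟩
      rw [hzN] at h0
      linarith
    · rw [hlamN]
      have : (n:ℝ)*((n:ℝ)-1)/4 ≤ ((n:ℝ)-1)*((n:ℝ)+2)/4 := by nlinarith
      nlinarith
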